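/- Let κ₀, τ₀, ρ be real numbers with κ₀ ≠ 0 such that (κ₀² + τ₀²)² = (2κ₀² + τ₀²)·ρ. Then ρ > 0, ρ ≥ τ₀², and either κ₀² = (ρ − τ₀²) + √(ρ(ρ − τ₀²)) or κ₀² = (ρ − τ₀²) − √(ρ(ρ − τ₀²)). In particular, if τ₀ = 0 then κ₀² = 2ρ. -/
import Mathlib


/-- The triharmonicity condition `(κ₀² + τ₀²)² = (2κ₀² + τ₀²)ρ` for a Frenet helix with
`κ₀ ≠ 0` forces `ρ > 0`, `ρ ≥ τ₀²`, and the stated values of `κ₀²`; for `τ₀ = 0` one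
gets `κ₀² = 2ρ`. -/
theorem stmt_11 (κ₀ τ₀ ρ : ℝ) (hκ₀ : κ₀ ≠ 0)
    (h : (κ₀ ^ 2 + τ₀ ^ 2) ^ 2 = (2 * κ₀ ^ 2 + τ₀ ^ 2) * ρ) :
    0 < ρ ∧ τ₀ ^ 2 ≤ ρ ∧
      (κ₀ ^ 2 = (ρ - τ₀ ^ 2) + Real.sqrt (ρ * (ρ - τ₀ ^ 2)) ∨
       κ₀ ^ 2 = (ρ - τ₀ ^ 2) - Real.sqrt (ρ * (ρ - τ₀ ^ 2))) ∧
      (τ₀ = 0 → κ₀ ^ 2 = 2 * ρ) := by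
  have hx : 0 < κ₀ ^ 2 := by positivity
  have hρ : 0 < ρ := by
    have h1 : 0 < 2 * κ₀ ^ 2 + τ₀ ^ 2 := by positivity
    have h2 : 0 < (κ₀ ^ 2 + τ₀ ^ 2) ^ 2 := by positivity
    nlinarith
  have hsq : (κ₀ ^ 2 + τ₀ ^ 2 - ρ) ^ 2 = ρ * (ρ - τ₀ ^ 2) := by nlinarith
  have hd : 0 ≤ ρ * (ρ - τ₀ ^ 2) := hsq ▸ sq_nonneg _
  have hτρ : τ₀ ^ 2 ≤ ρ := by nlinarith
  have hsqrt : Real.sqrt (ρ * (ρ - τ₀ ^ 2)) = |κ₀ ^ 2 + τ₀ ^ 2 - ρ| := by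
    rw [← hsq, Real.sqrt_sq_eq_abs]
  refine ⟨hρ, hτρ, ?_, ?_⟩
  · rcases abs_cases (κ₀ ^ 2 + τ₀ ^ 2 - ρ) with ⟨ha, _⟩ | ⟨ha, _⟩
    · left; rw [hsqrt, ha]; ring
    · right; rw [hsqrt, ha]; ring
  · intro hτ
    subst hτ
    nlinarith
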